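/- Let J_A, J_B : ℝ^n → ℝ^n be firmly nonexpansive, let C : ℝ^n → ℝ^n be β-cocoercive for β > 0, let γ ∈ (0, 2β), and suppose the Davis–Yin operator T_DY = Id − J_B + J_A ∘ (2J_B − Id − γ C ∘ J_B) has a nonempty fixed-point set. Then for any summable sequences (v_x^t), (v_y^t), (v_z^t) in ℝ^n and any z^0 ∈ ℝ^n, the perturbed Davis–Yin iteration x^t = J_B(z^t) + v_x^t, y^t = J_A(2x^t − z^t − γC(x^t)) + v_y^t, z^{t+1} = z^t + y^t − x^t + v_z^t generates a sequence (z^t) converging to some z⋆ with T_DY(z⋆) = z⋆, and the sequence (x^t) converges to J_B(z⋆). -/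

import Mathlib

open Filter Topology

lemma dyKey {E : Type*} [NormedAddCommGroup E] [InnerProductSpace ℝ E]
    (β γ : ℝ) (hβ : 0 < β) (hγ0 : 0 < γ) (hγ : γ < 2*β)
    (d p q c : E)
    (h1 : (inner ℝ p d : ℝ) ≥ ‖p‖^2)
    (h2 : (inner ℝ q ((2:ℝ)•p - d - γ•c) : ℝ) ≥ ‖q‖^2)
    (h3 : (inner ℝ p c : ℝ) ≥ β*‖c‖^2) :
    ‖d + q - p‖^2 ≤ ‖d‖^2 - (1 - γ/(2*β)) * ‖q - p‖^2 := by
  have e1 : ‖d + q - p‖^2 = ‖d‖^2 + 2*(inner ℝ d (q-p) : ℝ) + ‖q-p‖^2 := by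
    rw [add_sub_assoc, norm_add_sq_real]
  have e2 : (inner ℝ q ((2:ℝ)•p - d - γ•c) : ℝ)
      = 2*(inner ℝ q p : ℝ) - (inner ℝ q d : ℝ) - γ*(inner ℝ q c : ℝ) := by
    simp [inner_sub_right, inner_smul_right]
  have e3 : ‖q-p‖^2 = ‖q‖^2 - 2*(inner ℝ q p : ℝ) + ‖p‖^2 := norm_sub_sq_real q p
  have e4 : (inner ℝ q c : ℝ) = (inner ℝ (q-p) c : ℝ) + (inner ℝ p c : ℝ) := by
    rw [inner_sub_left]; ring
  have e5 : (inner ℝ d (q-p) : ℝ) = (inner ℝ q d : ℝ) - (inner ℝ p d : ℝ) := by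
    rw [inner_sub_right, real_inner_comm d q, real_inner_comm d p]
  have hcs : (inner ℝ (q - p) c : ℝ) ≥ -(‖q - p‖ * ‖c‖) := by
    have h := real_inner_le_norm (p - q) c
    have hn : (inner ℝ (p - q) c : ℝ) = -(inner ℝ (q-p) c : ℝ) := by
      rw [← neg_sub q p, inner_neg_left]
    rw [hn, norm_sub_rev] at h
    linarith
  have t1 : γ * (inner ℝ (q-p) c : ℝ) ≥ -(γ*(‖q-p‖*‖c‖)) := by nlinarith
  have t2 : γ * (inner ℝ p c : ℝ) ≥ γ*(β*‖c‖^2) := by nlinarith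
  have t3 : 2*(γ*(‖q-p‖*‖c‖)) ≤ γ/(2*β)*‖q-p‖^2 + 2*(γ*(β*‖c‖^2)) := by
    have hsq := sq_nonneg (‖q-p‖ - 2*β*‖c‖)
    have hpos : (0:ℝ) < γ/(2*β) := div_pos hγ0 (by linarith)
    have hb : (2*β) ≠ 0 := by positivity
    have hexp : γ/(2*β)*(‖q-p‖ - 2*β*‖c‖)^2
        = γ/(2*β)*‖q-p‖^2 - 2*(γ*(‖q-p‖*‖c‖)) + 2*(γ*(β*‖c‖^2)) := by
      field_simp; ring
    nlinarith [mul_nonneg hpos.le hsq, hexp]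
  rw [e2, e4] at h2
  rw [e1]
  linarith [e3, e5, h1, h2, t1, t2, t3]

lemma sqle {a b : ℝ} (ha : 0 ≤ a) (hb : 0 ≤ b) (h : a^2 ≤ b^2) : a ≤ b := by nlinarith

lemma kmConverges {E : Type*} [NormedAddCommGroup E] [InnerProductSpace ℝ E]
    [FiniteDimensional ℝ E]
    (T : E → E) (κ : ℝ) (hκ : 0 < κ)
    (hT : ∀ z w, ‖T z - T w‖^2 ≤ ‖z - w‖^2 - κ * ‖(z - T z) - (w - T w)‖^2)
    (w0 : E) (hw0 : T w0 = w0)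
    (z : ℕ → E) (e : ℕ → E) (hz : ∀ t, z (t+1) = T (z t) + e t)
    (he : Summable fun t => ‖e t‖) :
    ∃ zs, T zs = zs ∧ Tendsto z atTop (𝓝 zs) := by
  set ε : ℕ → ℝ := fun t => ‖e t‖ with hε
  have hεnn : ∀ t, 0 ≤ ε t := fun t => norm_nonneg _
  -- nonexpansiveness
  have hne : ∀ a b, ‖T a - T b‖ ≤ ‖a - b‖ := by
    intro a b
    have h := hT a b
    have h2 := sq_nonneg ‖(a - T a) - (b - T b)‖
    refine sqle (norm_nonneg _) (norm_nonneg _) ?_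
    nlinarith [mul_nonneg hκ.le h2]
  -- tails
  set τ : ℕ → ℝ := fun t => ∑' s, ε (s + t) with hτdef
  have hsumtail : ∀ t, Summable (fun s => ε (s + t)) := fun t =>
    (summable_nat_add_iff t).mpr he
  have hτrec : ∀ t, τ t = ε t + τ (t+1) := by
    intro t
    have h0 := Summable.tsum_eq_zero_add (hsumtail t)
    have : (∑' s, ε (s + 1 + t)) = ∑' s, ε (s + (t+1)) := by
      apply tsum_congr; intro s; congr 1; ring
    simpa [this] using h0
  have hτnn : ∀ t, 0 ≤ τ t := fun t => tsum_nonneg (fun s => hεnn _)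
  have hτ0 : Tendsto τ atTop (𝓝 0) := by
    simpa [hτdef] using tendsto_sum_nat_add ε
  -- quasi-Fejér recurrence
  have hb : ∀ w, T w = w → ∀ t, ‖z (t+1) - w‖ ≤ ‖z t - w‖ + ε t := by
    intro w hw t
    have : z (t+1) - w = (T (z t) - T w) + e t := by rw [hz t, hw]; abel
    calc ‖z (t+1) - w‖ = ‖(T (z t) - T w) + e t‖ := by rw [this]
      _ ≤ ‖T (z t) - T w‖ + ε t := norm_add_le _ _
      _ ≤ ‖z t - w‖ + ε t := by linarith [hne (z t) w]
  have hganti : ∀ w, T w = w → Antitone (fun t => ‖z t - w‖ + τ t) := by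
    intro w hw
    apply antitone_nat_of_succ_le
    intro t
    have h1 := hb w hw t
    have h2 := hτrec t
    show ‖z (t+1) - w‖ + τ (t+1) ≤ ‖z t - w‖ + τ t
    linarith
  -- boundedness
  set M : ℝ := ‖z 0 - w0‖ + τ 0 with hM
  have hbd : ∀ t, ‖z t - w0‖ ≤ M := by
    intro t
    have h1 : ‖z t - w0‖ + τ t ≤ ‖z 0 - w0‖ + τ 0 := hganti w0 hw0 (Nat.zero_le t)
    rw [hM]
    linarith [hτnn t]
  set S : ℝ := ∑' t, ε t with hS
  have hεS : ∀ t, ε t ≤ S := by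
    intro t
    exact Summable.le_tsum he t (fun j _ => hεnn j)
  -- residual bound
  set r : ℕ → ℝ := fun t => κ * ‖z t - T (z t)‖^2 with hr
  have hrnn : ∀ t, 0 ≤ r t := fun t => mul_nonneg hκ.le (sq_nonneg _)
  have hrbound : ∀ t, r t ≤ ‖z t - w0‖^2 - ‖z (t+1) - w0‖^2 + (2*M + S) * ε t := by
    intro t
    have h1 := hT (z t) w0
    rw [hw0, sub_self, sub_zero] at h1
    -- ‖T z t - w0‖² ≤ ‖z t - w0‖² - κ ‖z t - T z t‖²
    have h2 : ‖z (t+1) - w0‖ ≤ ‖T (z t) - w0‖ + ε t := by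
      have : z (t+1) - w0 = (T (z t) - w0) + e t := by rw [hz t]; abel
      rw [this]; exact norm_add_le _ _
    have h3 : ‖T (z t) - w0‖ ≤ M := by
      have := hne (z t) w0
      rw [hw0] at this
      linarith [hbd t]
    have h4 : ‖z (t+1) - w0‖^2 ≤ ‖T (z t) - w0‖^2 + 2*M*ε t + ε t^2 := by
      nlinarith [norm_nonneg (z (t+1) - w0), norm_nonneg (T (z t) - w0), hεnn t]
    have h5 : ε t^2 ≤ S * ε t := by nlinarith [hεS t, hεnn t]
    simp only [hr]
    nlinarith
  -- summable residuals
  have hrsum : Summable r := by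
    apply summable_of_sum_range_le hrnn (c := ‖z 0 - w0‖^2 + (2*M + S) * S)
    intro N
    have htel : ∑ t ∈ Finset.range N, (‖z t - w0‖^2 - ‖z (t+1) - w0‖^2)
        = ‖z 0 - w0‖^2 - ‖z N - w0‖^2 := by
      exact Finset.sum_range_sub' (fun t => ‖z t - w0‖^2) N
    have h1 : ∑ t ∈ Finset.range N, r t
        ≤ ∑ t ∈ Finset.range N, ((‖z t - w0‖^2 - ‖z (t+1) - w0‖^2) + (2*M + S) * ε t) :=
      Finset.sum_le_sum (fun t _ => hrbound t)
    rw [Finset.sum_add_distrib, htel] at h1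
    have h2 : ∑ t ∈ Finset.range N, ε t ≤ S := Summable.sum_le_tsum _ (fun i _ => hεnn i) he
    have h3 : 0 ≤ 2*M + S := by
      have hM0 : 0 ≤ M := le_trans (norm_nonneg _) (hbd 0)
      have hS0 : 0 ≤ S := tsum_nonneg hεnn
      linarith
    have h2' : ∑ t ∈ Finset.range N, (2*M + S) * ε t ≤ (2*M + S) * S := by
      rw [← Finset.mul_sum]
      exact mul_le_mul_of_nonneg_left h2 h3
    linarith [sq_nonneg ‖z N - w0‖]
  have hres : Tendsto (fun t => z t - T (z t)) atTop (𝓝 0) := by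
    rw [tendsto_zero_iff_norm_tendsto_zero]
    have h1 : Tendsto r atTop (𝓝 0) := hrsum.tendsto_atTop_zero
    have h2 : Tendsto (fun t => ‖z t - T (z t)‖^2) atTop (𝓝 0) := by
      have : (fun t => ‖z t - T (z t)‖^2) = fun t => r t / κ := by
        funext t; rw [hr]; field_simp
      rw [this]
      simpa using h1.div_const κ
    have h3 := h2.sqrt
    simpa [Real.sqrt_sq (norm_nonneg _)] using h3
  -- compactness: convergent subsequence
  have hmem : ∀ t, z t ∈ Metric.closedBall w0 M := by
    intro t
    rw [Metric.mem_closedBall, dist_eq_norm]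
    exact hbd t
  obtain ⟨zs, _, φ, hφ, hlim⟩ :=
    (isCompact_closedBall w0 M).tendsto_subseq hmem
  have hTcont : Continuous T := by
    have : LipschitzWith 1 T := by
      apply LipschitzWith.of_dist_le_mul
      intro a b
      rw [dist_eq_norm, dist_eq_norm]
      simpa using hne a b
    exact this.continuous
  have hzs : T zs = zs := by
    have h1 : Tendsto (fun k => z (φ k) - T (z (φ k))) atTop (𝓝 (zs - T zs)) :=
      hlim.sub ((hTcont.tendsto zs).comp hlim)
    have h2 : Tendsto (fun k => z (φ k) - T (z (φ k))) atTop (𝓝 0) :=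
      hres.comp (hφ.tendsto_atTop)
    have := tendsto_nhds_unique h1 h2
    have : T zs = zs := by
      have h := sub_eq_zero.mp this
      exact h.symm
    exact this
  refine ⟨zs, hzs, ?_⟩
  -- convergence of the whole sequence
  set g : ℕ → ℝ := fun t => ‖z t - zs‖ + τ t with hg
  have hganti' := hganti zs hzs
  have hgbdd : BddBelow (Set.range g) := by
    refine ⟨0, ?_⟩
    rintro _ ⟨t, rfl⟩
    exact add_nonneg (norm_nonneg _) (hτnn t)
  have hgconv : Tendsto g atTop (𝓝 (⨅ t, g t)) := tendsto_atTop_ciInf hganti' hgbdd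
  have hsub0 : Tendsto (fun k => ‖z (φ k) - zs‖) atTop (𝓝 0) := by
    have := (tendsto_iff_norm_sub_tendsto_zero).mp hlim
    simpa using this
  have hgsub : Tendsto (fun k => g (φ k)) atTop (𝓝 0) := by
    have hτφ : Tendsto (fun k => τ (φ k)) atTop (𝓝 0) := hτ0.comp hφ.tendsto_atTop
    simpa using hsub0.add hτφ
  have hinf0 : (⨅ t, g t) = 0 :=
    tendsto_nhds_unique (hgconv.comp hφ.tendsto_atTop) hgsub
  rw [hinf0] at hgconv
  have hbconv : Tendsto (fun t => ‖z t - zs‖) atTop (𝓝 0) := by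
    have : (fun t => ‖z t - zs‖) = fun t => g t - τ t := by
      funext t; simp [hg]
    rw [this]
    simpa using hgconv.sub hτ0
  rw [tendsto_iff_norm_sub_tendsto_zero]
  exact hbconv


lemma normle {a b : ℝ} (ha : 0 ≤ a) (hb : 0 ≤ b) (h : a^2 ≤ a*b) : a ≤ b := by
  nlinarith

/-- Convergence of the perturbed Davis–Yin splitting: with
`J_A, J_B` firmly nonexpansive, `C` β-cocoercive, `γ ∈ (0, 2β)`, the Davis–Yin
operator `T_DY = Id - J_B + J_A ∘ (2 J_B - Id - γ C ∘ J_B)` having a fixed point,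
and summable perturbations `v_x, v_y, v_z`, the perturbed iteration
`x^t = J_B z^t + v_x^t`, `y^t = J_A(2x^t - z^t - γ C x^t) + v_y^t`,
`z^{t+1} = z^t + y^t - x^t + v_z^t` yields `z^t → z⋆` with `T_DY z⋆ = z⋆`
and `x^t → J_B z⋆`. -/
theorem perturbed_davis_yin_converges
    {n : ℕ} (JA JB C : EuclideanSpace ℝ (Fin n) → EuclideanSpace ℝ (Fin n))
    (hJA : ∀ x y, (inner ℝ (JA x - JA y) (x - y) : ℝ) ≥ ‖JA x - JA y‖ ^ 2)
    (hJB : ∀ x y, (inner ℝ (JB x - JB y) (x - y) : ℝ) ≥ ‖JB x - JB y‖ ^ 2)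
    (β : ℝ) (hβ : 0 < β)
    (hC : ∀ x y, (inner ℝ (x - y) (C x - C y) : ℝ) ≥ β * ‖C x - C y‖ ^ 2)
    (γ : ℝ) (hγ0 : 0 < γ) (hγ2β : γ < 2 * β)
    (hfix : {w : EuclideanSpace ℝ (Fin n) |
      w - JB w + JA ((2 : ℝ) • JB w - w - γ • C (JB w)) = w}.Nonempty)
    (vx vy vz : ℕ → EuclideanSpace ℝ (Fin n))
    (hvx : Summable fun t => ‖vx t‖)
    (hvy : Summable fun t => ‖vy t‖)
    (hvz : Summable fun t => ‖vz t‖)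
    (x y z : ℕ → EuclideanSpace ℝ (Fin n))
    (hx : ∀ t, x t = JB (z t) + vx t)
    (hy : ∀ t, y t = JA ((2 : ℝ) • x t - z t - γ • C (x t)) + vy t)
    (hz : ∀ t, z (t + 1) = z t + y t - x t + vz t) :
    ∃ zstar : EuclideanSpace ℝ (Fin n),
      zstar - JB zstar + JA ((2 : ℝ) • JB zstar - zstar - γ • C (JB zstar)) = zstar ∧
      Tendsto z atTop (𝓝 zstar) ∧
      Tendsto x atTop (𝓝 (JB zstar)) := by
  set T : EuclideanSpace ℝ (Fin n) → EuclideanSpace ℝ (Fin n) :=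
    fun w => w - JB w + JA ((2 : ℝ) • JB w - w - γ • C (JB w)) with hTdef
  -- nonexpansiveness of JA, JB; Lipschitzness of C
  have hJAne : ∀ a b, ‖JA a - JA b‖ ≤ ‖a - b‖ := by
    intro a b
    refine normle (norm_nonneg _) (norm_nonneg _) ?_
    calc ‖JA a - JA b‖^2 ≤ (inner ℝ (JA a - JA b) (a - b) : ℝ) := hJA a b
      _ ≤ ‖JA a - JA b‖ * ‖a - b‖ := real_inner_le_norm _ _
  have hJBne : ∀ a b, ‖JB a - JB b‖ ≤ ‖a - b‖ := by
    intro a b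
    refine normle (norm_nonneg _) (norm_nonneg _) ?_
    calc ‖JB a - JB b‖^2 ≤ (inner ℝ (JB a - JB b) (a - b) : ℝ) := hJB a b
      _ ≤ ‖JB a - JB b‖ * ‖a - b‖ := real_inner_le_norm _ _
  have hCL : ∀ a b, ‖C a - C b‖ ≤ (1/β) * ‖a - b‖ := by
    intro a b
    have h1 := hC a b
    have h2 := real_inner_le_norm (a - b) (C a - C b)
    have h3 : β * ‖C a - C b‖ ≤ ‖a - b‖ := by
      nlinarith [norm_nonneg (C a - C b), norm_nonneg (a - b)]
    calc ‖C a - C b‖ = (1/β) * (β * ‖C a - C b‖) := by field_simp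
      _ ≤ (1/β) * ‖a - b‖ := by
          apply mul_le_mul_of_nonneg_left h3 (by positivity)
  -- the contraction inequality
  set κ : ℝ := 1 - γ/(2*β) with hκdef
  have hκ : 0 < κ := by
    rw [hκdef, sub_pos, div_lt_one (by linarith)]
    linarith
  have hcontr : ∀ zz ww, ‖T zz - T ww‖^2 ≤ ‖zz - ww‖^2 - κ * ‖(zz - T zz) - (ww - T ww)‖^2 := by
    intro zz ww
    set u : EuclideanSpace ℝ (Fin n) := (2 : ℝ) • JB zz - zz - γ • C (JB zz) with hu
    set u' : EuclideanSpace ℝ (Fin n) := (2 : ℝ) • JB ww - ww - γ • C (JB ww) with hu'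
    have harg : u - u' = (2:ℝ) • (JB zz - JB ww) - (zz - ww) - γ • (C (JB zz) - C (JB ww)) := by
      rw [hu, hu']
      simp only [smul_sub]
      abel
    have h2 : (inner ℝ (JA u - JA u')
        ((2:ℝ) • (JB zz - JB ww) - (zz - ww) - γ • (C (JB zz) - C (JB ww))) : ℝ)
        ≥ ‖JA u - JA u'‖^2 := by
      rw [← harg]; exact hJA u u'
    have key := dyKey β γ hβ hγ0 hγ2β (zz - ww) (JB zz - JB ww) (JA u - JA u')
      (C (JB zz) - C (JB ww)) (hJB zz ww) h2 (hC (JB zz) (JB ww))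
    have hTz : T zz - T ww = (zz - ww) + (JA u - JA u') - (JB zz - JB ww) := by
      rw [hTdef]; simp only [hu, hu']; abel
    have hres : (zz - T zz) - (ww - T ww) = (JB zz - JB ww) - (JA u - JA u') := by
      rw [hTdef]; simp only [hu, hu']; abel
    rw [hTz, hres, norm_sub_rev (JB zz - JB ww)]
    exact key
  -- error sequence
  set e : ℕ → EuclideanSpace ℝ (Fin n) := fun t => z (t+1) - T (z t) with hedef
  have hziter : ∀ t, z (t+1) = T (z t) + e t := by
    intro t; rw [hedef]; simp
  have hebound : ∀ t, ‖e t‖ ≤ (3 + γ/β) * ‖vx t‖ + ‖vy t‖ + ‖vz t‖ := by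
    intro t
    set up : EuclideanSpace ℝ (Fin n) := (2:ℝ) • x t - z t - γ • C (x t) with hup
    set u0 : EuclideanSpace ℝ (Fin n) := (2:ℝ) • JB (z t) - z t - γ • C (JB (z t)) with hu0
    have hee : e t = (JA up - JA u0) + vy t + (vz t - vx t) := by
      rw [hedef]
      simp only [hz t, hTdef, hy t, hx t, hup, hu0]
      abel
    have hxsub : x t - JB (z t) = vx t := by rw [hx t]; abel
    have harg : up - u0 = (2:ℝ) • vx t - γ • (C (x t) - C (JB (z t))) := by
      rw [hup, hu0, ← hxsub]
      simp only [smul_sub]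
      abel
    have hCdiff : ‖C (x t) - C (JB (z t))‖ ≤ (1/β) * ‖vx t‖ := by
      calc ‖C (x t) - C (JB (z t))‖ ≤ (1/β) * ‖x t - JB (z t)‖ := hCL _ _
        _ = (1/β) * ‖vx t‖ := by rw [hxsub]
    have hargnorm : ‖up - u0‖ ≤ (2 + γ/β) * ‖vx t‖ := by
      rw [harg]
      calc ‖(2:ℝ) • vx t - γ • (C (x t) - C (JB (z t)))‖
          ≤ ‖(2:ℝ) • vx t‖ + ‖γ • (C (x t) - C (JB (z t)))‖ := norm_sub_le _ _
        _ = 2 * ‖vx t‖ + γ * ‖C (x t) - C (JB (z t))‖ := by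
            rw [norm_smul, norm_smul, Real.norm_ofNat, Real.norm_eq_abs, abs_of_pos hγ0]
        _ ≤ 2 * ‖vx t‖ + γ * ((1/β) * ‖vx t‖) := by
            have := mul_le_mul_of_nonneg_left hCdiff hγ0.le
            linarith
        _ = (2 + γ/β) * ‖vx t‖ := by ring
    calc ‖e t‖ = ‖(JA up - JA u0) + vy t + (vz t - vx t)‖ := by rw [hee]
      _ ≤ ‖(JA up - JA u0) + vy t‖ + ‖vz t - vx t‖ := norm_add_le _ _
      _ ≤ ‖JA up - JA u0‖ + ‖vy t‖ + (‖vz t‖ + ‖vx t‖) := by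
          have h1 := norm_add_le (JA up - JA u0) (vy t)
          have h2 := norm_sub_le (vz t) (vx t)
          linarith
      _ ≤ ‖up - u0‖ + ‖vy t‖ + (‖vz t‖ + ‖vx t‖) := by linarith [hJAne up u0]
      _ ≤ (2 + γ/β) * ‖vx t‖ + ‖vy t‖ + (‖vz t‖ + ‖vx t‖) := by linarith [hargnorm]
      _ = (3 + γ/β) * ‖vx t‖ + ‖vy t‖ + ‖vz t‖ := by ring
  have hesum : Summable (fun t => ‖e t‖) := by
    apply Summable.of_nonneg_of_le (fun t => norm_nonneg _) hebound
    exact ((hvx.mul_left (3 + γ/β)).add hvy).add hvz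
  -- apply the KM convergence lemma
  obtain ⟨w0, hw0⟩ := hfix
  have hw0' : T w0 = w0 := hw0
  obtain ⟨zs, hzs, hzconv⟩ := kmConverges T κ hκ hcontr w0 hw0' z e hziter hesum
  refine ⟨zs, hzs, hzconv, ?_⟩
  -- x t → JB zs
  have hvx0 : Tendsto vx atTop (𝓝 0) := by
    rw [tendsto_zero_iff_norm_tendsto_zero]
    exact hvx.tendsto_atTop_zero
  have hJBcont : Continuous JB := by
    have : LipschitzWith 1 JB := by
      apply LipschitzWith.of_dist_le_mul
      intro a b
      rw [dist_eq_norm, dist_eq_norm]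
      simpa using hJBne a b
    exact this.continuous
  have hxeq : x = fun t => JB (z t) + vx t := funext hx
  rw [hxeq]
  have := ((hJBcont.tendsto zs).comp hzconv).add hvx0
  simpa using this
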